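/- For (a,b) ∈ ℝ², define the 4×4 real matrices Ĝ(a,b) = [[0,0,1+a²,−ab],[0,0,ab,−(1+b²)],[1+a²,ab,0,0],[−ab,−(1+b²),0,0]] and Ĵ = [[0,0,0,1],[0,0,1,0],[0,−1,0,0],[−1,0,0,0]]. Then for every (a,b) ∈ ℝ²: (i) det Ĝ(a,b) = (1+a²+b²)², so Ĝ(a,b) is invertible; (ii) the matrix K̃(a,b) = Ĝ(a,b)⁻¹·Ĵ satisfies K̃(a,b)² = −(1+a²+b²)⁻¹·Id₄; (iii) consequently the rescaled matrix K(a,b) = (1/√(1+a²+b²))·[[−ab,−(1+b²),0,0],[1+a²,ab,0,0],[0,0,ab,−(1+a²)],[0,0,1+b²,−ab]] satisfies K(a,b)² = −Id₄, so K(a,b) is a complex structure on ℝ⁴. -/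

import Mathlib

open Matrix

noncomputable section

/-- Matrix of the landing-mode metric `ĝ` in the coframe `(dx,dy,db,da)`. -/
def Ghat (a b : ℝ) : Matrix (Fin 4) (Fin 4) ℝ :=
  !![0, 0, 1 + a^2, -(a*b);
     0, 0, a*b, -(1 + b^2);
     1 + a^2, a*b, 0, 0;
     -(a*b), -(1 + b^2), 0, 0]

/-- Matrix of the symplectic form `Ω = dx∧da + dy∧db` in the coframe `(dx,dy,db,da)`. -/
def Jhat : Matrix (Fin 4) (Fin 4) ℝ := !![0,0,0,1; 0,0,1,0; 0,-1,0,0; -1,0,0,0]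

/-- The rescaled operator `K(a,b)`. -/
def Kop (a b : ℝ) : Matrix (Fin 4) (Fin 4) ℝ :=
  (Real.sqrt (1 + a^2 + b^2))⁻¹ •
    !![-(a*b), -(1 + b^2), 0, 0;
       1 + a^2, a*b, 0, 0;
       0, 0, a*b, -(1 + a^2);
       0, 0, 1 + b^2, -(a*b)]

/-- The unscaled matrix appearing in `Kop`. -/
def Kmat (a b : ℝ) : Matrix (Fin 4) (Fin 4) ℝ :=
  !![-(a*b), -(1 + b^2), 0, 0;
     1 + a^2, a*b, 0, 0;
     0, 0, a*b, -(1 + a^2);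
     0, 0, 1 + b^2, -(a*b)]

/-- The unscaled matrix appearing in the inverse of `Ghat`. -/
def Nmat (a b : ℝ) : Matrix (Fin 4) (Fin 4) ℝ :=
  !![0, 0, 1 + b^2, a*b;
     0, 0, -(a*b), -(1 + a^2);
     1 + b^2, -(a*b), 0, 0;
     a*b, -(1 + a^2), 0, 0]

/-- The unscaled matrix `N·Ĵ`. -/
def Mtil (a b : ℝ) : Matrix (Fin 4) (Fin 4) ℝ :=
  !![-(a*b), -(1 + b^2), 0, 0;
     1 + a^2, a*b, 0, 0;
     0, 0, -(a*b), 1 + b^2;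
     0, 0, -(1 + a^2), a*b]

lemma dpos (a b : ℝ) : (0:ℝ) < 1 + a^2 + b^2 := by positivity

lemma Ghat_mul_Nmat (a b : ℝ) :
    Ghat a b * Nmat a b = (1 + a^2 + b^2) • (1 : Matrix (Fin 4) (Fin 4) ℝ) := by
  ext i j
  fin_cases i <;> fin_cases j <;>
    simp [Ghat, Nmat, Matrix.mul_apply, Fin.sum_univ_four, Matrix.one_apply,
      Matrix.vecHead, Matrix.vecTail] <;> ring

lemma Ghat_inv (a b : ℝ) :
    (Ghat a b)⁻¹ = (1 + a^2 + b^2)⁻¹ • Nmat a b := by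
  have hd : (1 + a^2 + b^2 : ℝ) ≠ 0 := (dpos a b).ne'
  refine Matrix.inv_eq_right_inv ?_
  rw [Matrix.mul_smul, Ghat_mul_Nmat, smul_smul, inv_mul_cancel₀ hd, one_smul]

lemma NJ_eq (a b : ℝ) : Nmat a b * Jhat = Mtil a b := by
  ext i j
  fin_cases i <;> fin_cases j <;>
    simp [Nmat, Jhat, Mtil, Matrix.mul_apply, Fin.sum_univ_four,
      Matrix.vecHead, Matrix.vecTail] <;> ring

lemma Mtil_sq (a b : ℝ) :
    Mtil a b * Mtil a b = (-(1 + a^2 + b^2)) • (1 : Matrix (Fin 4) (Fin 4) ℝ) := by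
  ext i j
  fin_cases i <;> fin_cases j <;>
    simp [Mtil, Matrix.mul_apply, Fin.sum_univ_four, Matrix.one_apply,
      Matrix.vecHead, Matrix.vecTail] <;> ring

lemma Kmat_sq (a b : ℝ) :
    Kmat a b * Kmat a b = (-(1 + a^2 + b^2)) • (1 : Matrix (Fin 4) (Fin 4) ℝ) := by
  ext i j
  fin_cases i <;> fin_cases j <;>
    simp [Kmat, Matrix.mul_apply, Fin.sum_univ_four, Matrix.one_apply,
      Matrix.vecHead, Matrix.vecTail] <;> ring

theorem landing_mode_almost_complex (a b : ℝ) :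
    (Ghat a b).det = (1 + a^2 + b^2)^2 ∧
    IsUnit (Ghat a b).det ∧
    ((Ghat a b)⁻¹ * Jhat) * ((Ghat a b)⁻¹ * Jhat)
      = (-(1 + a^2 + b^2)⁻¹ : ℝ) • (1 : Matrix (Fin 4) (Fin 4) ℝ) ∧
    Kop a b * Kop a b = -1 := by
  have hd : (1 + a^2 + b^2 : ℝ) ≠ 0 := (dpos a b).ne'
  have hdet : (Ghat a b).det = (1 + a^2 + b^2)^2 := by
    simp [Ghat, Matrix.det_succ_row_zero, Fin.sum_univ_succ, Fin.succAbove]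
    ring
  refine ⟨hdet, ?_, ?_, ?_⟩
  · rw [hdet]; exact (isUnit_iff_ne_zero.mpr (pow_ne_zero _ hd))
  · rw [Ghat_inv, Matrix.smul_mul, NJ_eq, Matrix.smul_mul, Matrix.mul_smul,
      Mtil_sq, smul_smul, smul_smul]
    congr 1
    field_simp
  · have hs : Real.sqrt (1 + a^2 + b^2) * Real.sqrt (1 + a^2 + b^2)
        = 1 + a^2 + b^2 := Real.mul_self_sqrt (dpos a b).le
    have hK : Kop a b = (Real.sqrt (1 + a^2 + b^2))⁻¹ • Kmat a b := rfl
    rw [hK, Matrix.smul_mul, Matrix.mul_smul, Kmat_sq, smul_smul, smul_smul]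
    have h2 : (Real.sqrt (1 + a^2 + b^2))⁻¹ *
        (Real.sqrt (1 + a^2 + b^2))⁻¹ * -(1 + a^2 + b^2) = -1 := by
      rw [← mul_inv, hs]
      field_simp
    rw [h2, neg_one_smul]
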